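/- Let b > -1 and c > 0. Then there exists a constant C such that for all x, y in the unit ball of R^n, ∫_0^1 (1-τ)^b / [τx, y]^{1+b+c} dτ ≤ C / [x,y]^c. -/

import Mathlib

open Metric MeasureTheory RealInnerProductSpace

/-- The bracket `[x,y] = sqrt(1 - 2 x·y + |x|²|y|²)`. -/
noncomputable def bracket {n : ℕ} (x y : EuclideanSpace ℝ (Fin n)) : ℝ :=
  Real.sqrt (1 - 2 * ⟪x, y⟫ + ‖x‖ ^ 2 * ‖y‖ ^ 2)

section aux

variable {n : ℕ}

lemma bracket_pos {x y : EuclideanSpace ℝ (Fin n)} (hx : ‖x‖ < 1) (hy : ‖y‖ < 1) :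
    0 < bracket x y := by
  have ha : |⟪x, y⟫| ≤ ‖x‖ * ‖y‖ := abs_real_inner_le_norm x y
  have hs : ‖x‖ * ‖y‖ < 1 := by nlinarith [norm_nonneg x, norm_nonneg y]
  have hs0 : 0 ≤ ‖x‖ * ‖y‖ := by positivity
  rcases abs_le.mp ha with ⟨ha1, ha2⟩
  refine Real.sqrt_pos.mpr ?_
  have h1 : 0 < (1 - ‖x‖ * ‖y‖) ^ 2 := pow_pos (by linarith) 2
  nlinarith

lemma bracket_le_two {x y : EuclideanSpace ℝ (Fin n)} (hx : ‖x‖ < 1) (hy : ‖y‖ < 1) :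
    bracket x y ≤ 2 := by
  have ha : |⟪x, y⟫| ≤ ‖x‖ * ‖y‖ := abs_real_inner_le_norm x y
  have hs : ‖x‖ * ‖y‖ < 1 := by nlinarith [norm_nonneg x, norm_nonneg y]
  rcases abs_le.mp ha with ⟨ha1, ha2⟩
  have h4 : Real.sqrt 4 = 2 := by
    rw [show (4 : ℝ) = 2 ^ 2 by norm_num, Real.sqrt_sq (by norm_num)]
  calc bracket x y ≤ Real.sqrt 4 := Real.sqrt_le_sqrt (by nlinarith)
    _ = 2 := h4

lemma bracket_smul_lower {x y : EuclideanSpace ℝ (Fin n)} (hx : ‖x‖ < 1) (hy : ‖y‖ < 1)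
    {τ : ℝ} (ht0 : 0 ≤ τ) (ht1 : τ ≤ 1) :
    (1 - τ + bracket x y) / 12 ≤ bracket (τ • x) y := by
  set a := ⟪x, y⟫ with ha_def
  set s := ‖x‖ * ‖y‖ with hs_def
  have ha : |a| ≤ s := abs_real_inner_le_norm x y
  have hs : s < 1 := by
    have := norm_nonneg x; have := norm_nonneg y
    nlinarith
  have hs0 : 0 ≤ s := by positivity
  rcases abs_le.mp ha with ⟨ha1, ha2⟩
  have hq : (0 : ℝ) ≤ 1 - 2 * a + s ^ 2 := by nlinarith
  have hr2 : bracket x y ^ 2 = 1 - 2 * a + s ^ 2 := by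
    rw [bracket, Real.sq_sqrt]
    · rw [← mul_pow]
    · rw [← mul_pow]; exact hq
  have hxy : bracket (τ • x) y = Real.sqrt (1 - 2 * (τ * a) + τ ^ 2 * s ^ 2) := by
    rw [bracket, real_inner_smul_left, norm_smul, Real.norm_eq_abs, abs_of_nonneg ht0]
    congr 1
    ring
  have hf0 : (0 : ℝ) ≤ 1 - 2 * (τ * a) + τ ^ 2 * s ^ 2 := by
    nlinarith [sq_nonneg (1 - τ * s)]
  have hclaim1 : (1 - τ) ^ 2 ≤ 1 - 2 * (τ * a) + τ ^ 2 * s ^ 2 := by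
    have h1 : 0 ≤ τ * (1 - 2 * a + s ^ 2) := mul_nonneg ht0 hq
    have h2 : 0 ≤ τ * (1 - τ) * (1 - s ^ 2) := by
      apply mul_nonneg (mul_nonneg ht0 (by linarith))
      nlinarith
    nlinarith
  have hclaim2 : (τ * bracket x y) ^ 2 ≤ 1 - 2 * (τ * a) + τ ^ 2 * s ^ 2 := by
    have h1 : 0 ≤ (1 - τ) * (1 + τ - 2 * τ * a) := by
      apply mul_nonneg (by linarith)
      nlinarith
    rw [mul_pow, hr2]
    nlinarith
  have h1 : 1 - τ ≤ bracket (τ • x) y := by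
    rw [hxy]
    calc 1 - τ = Real.sqrt ((1 - τ) ^ 2) := (Real.sqrt_sq (by linarith)).symm
      _ ≤ _ := Real.sqrt_le_sqrt hclaim1
  have h2 : τ * bracket x y ≤ bracket (τ • x) y := by
    rw [hxy]
    calc τ * bracket x y = Real.sqrt ((τ * bracket x y) ^ 2) :=
          (Real.sqrt_sq (mul_nonneg ht0 (Real.sqrt_nonneg _))).symm
      _ ≤ _ := Real.sqrt_le_sqrt hclaim2
  have hr0 : 0 ≤ bracket x y := Real.sqrt_nonneg _
  have hrle2 : bracket x y ≤ 2 := bracket_le_two hx hy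
  rcases le_or_gt τ (1 / 2) with h | h
  · linarith
  · have hτr : bracket x y / 2 ≤ τ * bracket x y := by nlinarith
    linarith

lemma lint_bound (b c r : ℝ) (hb : -1 < b) (hc : 0 < c) (hr : 0 < r) :
    ∫⁻ u in Set.Ico (0 : ℝ) 1, ENNReal.ofReal (u ^ b * (u + r) ^ (-(1 + b + c)))
      ≤ ENNReal.ofReal ((1 / (b + 1) + 1 / c) * r ^ (-c)) := by
  set p := 1 + b + c with hp_def
  have hp : 0 < p := by simp only [hp_def]; linarith
  have hb1 : 0 < b + 1 := by linarith
  -- Bound on Ioc 0 r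
  have I1 : (∫⁻ u in Set.Ioc (0 : ℝ) r, ENNReal.ofReal (u ^ b * (u + r) ^ (-p)))
      ≤ ENNReal.ofReal (r ^ (-c) / (b + 1)) := by
    have step1 : (∫⁻ u in Set.Ioc (0 : ℝ) r, ENNReal.ofReal (u ^ b * (u + r) ^ (-p)))
        ≤ ∫⁻ u in Set.Ioc (0 : ℝ) r, ENNReal.ofReal (u ^ b * r ^ (-p)) := by
      apply setLIntegral_mono
        (((measurable_id.pow_const _).mul_const _).ennreal_ofReal)
      intro u hu
      apply ENNReal.ofReal_le_ofReal
      apply mul_le_mul_of_nonneg_left _ (Real.rpow_nonneg hu.1.le b)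
      exact Real.rpow_le_rpow_of_nonpos hr (by linarith [hu.1.le]) (by linarith)
    have hInt : IntegrableOn (fun u : ℝ => u ^ b * r ^ (-p)) (Set.Ioc 0 r) := by
      rw [← intervalIntegrable_iff_integrableOn_Ioc_of_le hr.le]
      exact (intervalIntegral.intervalIntegrable_rpow' hb).mul_const _
    have hNonneg : 0 ≤ᵐ[volume.restrict (Set.Ioc (0 : ℝ) r)]
        fun u : ℝ => u ^ b * r ^ (-p) := by
      filter_upwards [ae_restrict_mem measurableSet_Ioc] with u hu
      exact mul_nonneg (Real.rpow_nonneg hu.1.le b) (Real.rpow_nonneg hr.le _)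
    have step2 : (∫⁻ u in Set.Ioc (0 : ℝ) r, ENNReal.ofReal (u ^ b * r ^ (-p)))
        = ENNReal.ofReal (∫ u in Set.Ioc (0 : ℝ) r, u ^ b * r ^ (-p)) :=
      (ofReal_integral_eq_lintegral_ofReal hInt hNonneg).symm
    have hval : (∫ u in Set.Ioc (0 : ℝ) r, u ^ b * r ^ (-p)) = r ^ (-c) / (b + 1) := by
      rw [integral_mul_const]
      have : (∫ u in Set.Ioc (0 : ℝ) r, u ^ b) = ∫ u in (0 : ℝ)..r, u ^ b :=
        (intervalIntegral.integral_of_le hr.le).symm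
      rw [this, integral_rpow (Or.inl hb), Real.zero_rpow (by linarith)]
      rw [div_mul_eq_mul_div, sub_zero, ← Real.rpow_add hr]
      have he : b + 1 + -p = -c := by simp only [hp_def]; ring
      rw [he]
    rw [step2, hval] at step1
    exact step1
  -- Bound on Ioi r
  have I2 : (∫⁻ u in Set.Ioi r, ENNReal.ofReal (u ^ b * (u + r) ^ (-p)))
      ≤ ENNReal.ofReal (r ^ (-c) / c) := by
    have step1 : (∫⁻ u in Set.Ioi r, ENNReal.ofReal (u ^ b * (u + r) ^ (-p)))
        ≤ ∫⁻ u in Set.Ioi r, ENNReal.ofReal (u ^ (-1 - c)) := by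
      apply setLIntegral_mono ((measurable_id.pow_const _).ennreal_ofReal)
      intro u hu
      have hu0 : 0 < u := hr.trans hu
      apply ENNReal.ofReal_le_ofReal
      calc u ^ b * (u + r) ^ (-p) ≤ u ^ b * u ^ (-p) := by
            apply mul_le_mul_of_nonneg_left _ (Real.rpow_nonneg hu0.le b)
            exact Real.rpow_le_rpow_of_nonpos hu0 (by linarith) (by linarith)
        _ = u ^ (-1 - c) := by
            rw [← Real.rpow_add hu0]
            congr 1
            simp only [hp_def]; ring
    have hInt : IntegrableOn (fun u : ℝ => u ^ (-1 - c)) (Set.Ioi r) :=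
      integrableOn_Ioi_rpow_of_lt (by linarith) hr
    have hNonneg : 0 ≤ᵐ[volume.restrict (Set.Ioi r)] fun u : ℝ => u ^ (-1 - c) := by
      filter_upwards [ae_restrict_mem measurableSet_Ioi] with u hu
      exact Real.rpow_nonneg (hr.trans hu).le _
    have step2 : (∫⁻ u in Set.Ioi r, ENNReal.ofReal (u ^ (-1 - c)))
        = ENNReal.ofReal (∫ u in Set.Ioi r, u ^ (-1 - c)) :=
      (ofReal_integral_eq_lintegral_ofReal hInt hNonneg).symm
    have hval : (∫ u in Set.Ioi r, u ^ (-1 - c)) = r ^ (-c) / c := by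
      rw [integral_Ioi_rpow_of_lt (by linarith) hr]
      have he : -1 - c + 1 = -c := by ring
      rw [he]
      field_simp
    rw [step2, hval] at step1
    exact step1
  calc (∫⁻ u in Set.Ico (0 : ℝ) 1, ENNReal.ofReal (u ^ b * (u + r) ^ (-(1 + b + c))))
      = ∫⁻ u in Set.Ioo (0 : ℝ) 1, ENNReal.ofReal (u ^ b * (u + r) ^ (-p)) :=
        (setLIntegral_congr Ioo_ae_eq_Ico).symm
    _ ≤ ∫⁻ u in Set.Ioc (0 : ℝ) r ∪ Set.Ioi r, ENNReal.ofReal (u ^ b * (u + r) ^ (-p)) := by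
        apply lintegral_mono_set
        intro u hu
        rcases le_or_gt u r with h | h
        · exact Or.inl ⟨hu.1, h⟩
        · exact Or.inr h
    _ ≤ (∫⁻ u in Set.Ioc (0 : ℝ) r, ENNReal.ofReal (u ^ b * (u + r) ^ (-p)))
          + ∫⁻ u in Set.Ioi r, ENNReal.ofReal (u ^ b * (u + r) ^ (-p)) :=
        lintegral_union_le _ _ _
    _ ≤ ENNReal.ofReal (r ^ (-c) / (b + 1)) + ENNReal.ofReal (r ^ (-c) / c) :=
        add_le_add I1 I2
    _ = ENNReal.ofReal ((1 / (b + 1) + 1 / c) * r ^ (-c)) := by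
        rw [← ENNReal.ofReal_add (by positivity) (by positivity)]
        congr 1
        field_simp

end aux

theorem integral_estimate_dilation (n : ℕ) (hn : 2 ≤ n) (b c : ℝ)
    (hb : -1 < b) (hc : 0 < c) :
    ∃ C : ℝ, 0 < C ∧ ∀ x ∈ ball (0 : EuclideanSpace ℝ (Fin n)) 1,
      ∀ y ∈ ball (0 : EuclideanSpace ℝ (Fin n)) 1,
        (∫⁻ τ in Set.Ioc (0 : ℝ) 1,
            ENNReal.ofReal ((1 - τ) ^ b / bracket (τ • x) y ^ (1 + b + c))) ≤
          ENNReal.ofReal (C / bracket x y ^ c) := by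
  set p := 1 + b + c with hp_def
  have hp : 0 < p := by simp only [hp_def]; linarith
  have hb1 : 0 < b + 1 := by linarith
  have h12 : (0 : ℝ) < (12 : ℝ) ^ p := Real.rpow_pos_of_pos (by norm_num) p
  refine ⟨(12 : ℝ) ^ p * (1 / (b + 1) + 1 / c), by positivity, ?_⟩
  intro x hx y hy
  rw [mem_ball_zero_iff] at hx hy
  set r := bracket x y with hr_def
  have hr : 0 < r := bracket_pos hx hy
  -- substitution τ ↦ 1 - τ
  have emb : MeasurableEmbedding (fun t : ℝ => 1 - t) := by
    apply Measurable.measurableEmbedding (measurable_const.sub measurable_id)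
    intro a b h
    simp only [Pi.sub_apply, id_eq] at h
    linarith
  have mp : MeasurePreserving (fun t : ℝ => 1 - t) volume volume :=
    Measure.measurePreserving_sub_left volume 1
  have hsub : (∫⁻ τ in Set.Ioc (0 : ℝ) 1,
        ENNReal.ofReal ((1 - τ) ^ b / bracket (τ • x) y ^ p))
      = ∫⁻ u in Set.Ico (0 : ℝ) 1,
        ENNReal.ofReal (u ^ b / bracket ((1 - u) • x) y ^ p) := by
    have := mp.setLIntegral_comp_emb emb
      (fun u => ENNReal.ofReal (u ^ b / bracket ((1 - u) • x) y ^ p)) (Set.Ioc 0 1)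
    rw [Set.image_const_sub_Ioc] at this
    simp only [sub_sub_cancel, sub_zero, sub_self] at this
    exact this
  rw [hsub]
  -- pointwise bound
  have hstep : (∫⁻ u in Set.Ico (0 : ℝ) 1,
        ENNReal.ofReal (u ^ b / bracket ((1 - u) • x) y ^ p))
      ≤ ∫⁻ u in Set.Ico (0 : ℝ) 1,
        ENNReal.ofReal ((12 : ℝ) ^ p * (u ^ b * (u + r) ^ (-p))) := by
    apply setLIntegral_mono
      ((measurable_const.mul ((measurable_id.pow_const _).mul
        ((measurable_id.add_const r).pow_const _))).ennreal_ofReal)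
    intro u hu
    apply ENNReal.ofReal_le_ofReal
    have hu0 : 0 ≤ u := hu.1
    have hu1 : u < 1 := hu.2
    have hur : 0 < u + r := by linarith
    have hlow : (u + r) / 12 ≤ bracket ((1 - u) • x) y := by
      have := bracket_smul_lower hx hy (τ := 1 - u) (by linarith) (by linarith)
      rw [← hr_def] at this
      calc (u + r) / 12 = (1 - (1 - u) + r) / 12 := by ring_nf
        _ ≤ _ := this
    have hA : (0 : ℝ) < ((u + r) / 12) ^ p := Real.rpow_pos_of_pos (by positivity) p
    have hnum : 0 ≤ u ^ b := Real.rpow_nonneg hu0 b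
    have hmono : ((u + r) / 12) ^ p ≤ bracket ((1 - u) • x) y ^ p :=
      Real.rpow_le_rpow (by positivity) hlow hp.le
    calc u ^ b / bracket ((1 - u) • x) y ^ p
        ≤ u ^ b / ((u + r) / 12) ^ p := by
          apply div_le_div_of_nonneg_left hnum hA hmono
      _ = (12 : ℝ) ^ p * (u ^ b * (u + r) ^ (-p)) := by
          rw [Real.div_rpow hur.le (by norm_num), Real.rpow_neg hur.le]
          field_simp
  refine hstep.trans ?_
  have hfac : (∫⁻ u in Set.Ico (0 : ℝ) 1,
        ENNReal.ofReal ((12 : ℝ) ^ p * (u ^ b * (u + r) ^ (-p))))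
      = ENNReal.ofReal ((12 : ℝ) ^ p)
        * ∫⁻ u in Set.Ico (0 : ℝ) 1, ENNReal.ofReal (u ^ b * (u + r) ^ (-p)) := by
    simp_rw [ENNReal.ofReal_mul h12.le]
    exact lintegral_const_mul' _ _ ENNReal.ofReal_ne_top
  rw [hfac]
  calc ENNReal.ofReal ((12 : ℝ) ^ p)
        * ∫⁻ u in Set.Ico (0 : ℝ) 1, ENNReal.ofReal (u ^ b * (u + r) ^ (-p))
      ≤ ENNReal.ofReal ((12 : ℝ) ^ p)
        * ENNReal.ofReal ((1 / (b + 1) + 1 / c) * r ^ (-c)) := by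
        apply mul_le_mul_right (lint_bound b c r hb hc hr)
    _ = ENNReal.ofReal ((12 : ℝ) ^ p * (1 / (b + 1) + 1 / c) / r ^ c) := by
        rw [← ENNReal.ofReal_mul h12.le]
        congr 1
        rw [Real.rpow_neg hr.le]
        field_simp
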